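/- Let M : T^n → S be a (k,1)-persistent ε-Bayes-Nash truthful mechanism, and let P be the deterrent payment scheme with m verifications and fine d that charges player i the amount d if player i is among the m verified players and was caught lying, and 0 otherwise. If (m/n)·d ≥ ε, then M with P is k-tolerant Bayes-Nash truthful: for every I ⊆ [n] with |I| ≤ k, every announced types t'_I ∈ T^{|I|}, every player i ∉ I, every true type t_i ∈ T, and every announced type t_i' ∈ T, E_{t_J, X}[u_i(t_i, M(t_i, t'_I, t_J)) − P_i((t_i, t'_I, t_J), X)] ≥ E_{t_J, X}[u_i(t_i, M(t_i', t'_I, t_J)) − P_i((t_i', t'_I, t_J), X)], where J = [n]\(I ∪ {i}), t_J ∼ 𝒯^{|J|}, and X is the outcome of uniformly sampling m distinct players from [n] and recording for each sampled player whether his announced type equals his true type. -/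

import Mathlib

open MeasureTheory

noncomputable section

open Classical in
/-- The expected fine paid by player `i` under the deterrent payment scheme with `mver`
verifications and fine `d`: the set of verified players is a uniformly random `mver`-element
subset of the `n` players, and player `i` pays `d` exactly when `i` is verified and is caught
lying (`caught`). -/
def expectedFine (n mver : ℕ) (d : ℝ) (i : Fin n) (caught : Prop) : ℝ :=
  (∑ A ∈ Finset.powersetCard mver (Finset.univ : Finset (Fin n)),
      if i ∈ A ∧ caught then d else 0) /
    ((Finset.powersetCard mver (Finset.univ : Finset (Fin n))).card : ℝ)

open Classical in
lemma count_containing (n m : ℕ) (i : Fin n) (hm : 1 ≤ m) :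
    ((Finset.powersetCard m (Finset.univ : Finset (Fin n))).filter (fun A => i ∈ A)).card
      = (n - 1).choose (m - 1) := by
  have : ((Finset.powersetCard m (Finset.univ : Finset (Fin n))).filter (fun A => i ∈ A)).card
      = (Finset.powersetCard (m - 1) ((Finset.univ : Finset (Fin n)).erase i)).card := by
    refine Finset.card_bij' (fun A _ => A.erase i) (fun B _ => insert i B) ?_ ?_ ?_ ?_
    · intro A hA
      simp only [Finset.mem_filter, Finset.mem_powersetCard] at hA
      simp only [Finset.mem_powersetCard]
      constructor
      · intro x hx
        simp only [Finset.mem_erase] at hx ⊢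
        exact ⟨hx.1, Finset.mem_univ _⟩
      · rw [Finset.card_erase_of_mem hA.2, hA.1.2]
    · intro B hB
      simp only [Finset.mem_powersetCard] at hB
      have hiB : i ∉ B := fun h => (Finset.mem_erase.mp (hB.1 h)).1 rfl
      simp only [Finset.mem_filter, Finset.mem_powersetCard]
      refine ⟨⟨fun x _ => Finset.mem_univ _, ?_⟩, Finset.mem_insert_self _ _⟩
      rw [Finset.card_insert_of_notMem hiB, hB.2]
      omega
    · intro A hA
      simp only [Finset.mem_filter] at hA
      exact Finset.insert_erase hA.2
    · intro B hB
      simp only [Finset.mem_powersetCard] at hB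
      have hiB : i ∉ B := fun h => (Finset.mem_erase.mp (hB.1 h)).1 rfl
      exact Finset.erase_insert hiB
  rw [this, Finset.card_powersetCard, Finset.card_erase_of_mem (Finset.mem_univ i),
    Finset.card_univ, Fintype.card_fin]

open Classical in
lemma expectedFine_eq (n m : ℕ) (d : ℝ) (i : Fin n) (hm : m ≤ n) (c : Prop) (hc : c) :
    expectedFine n m d i c = ((m : ℝ) / n) * d := by
  have hn : 0 < n := i.pos
  unfold expectedFine
  have hsum : (∑ A ∈ Finset.powersetCard m (Finset.univ : Finset (Fin n)),
      if i ∈ A ∧ c then d else 0)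
      = ((Finset.powersetCard m (Finset.univ : Finset (Fin n))).filter (fun A => i ∈ A)).card • d := by
    rw [← Finset.sum_filter, Finset.sum_const]
    congr 2
    apply Finset.filter_congr
    intro A _
    exact and_iff_left hc
  rcases Nat.eq_zero_or_pos m with hm0 | hm1
  · subst hm0
    have : ((Finset.powersetCard 0 (Finset.univ : Finset (Fin n))).filter (fun A => i ∈ A)).card = 0 := by
      simp [Finset.powersetCard_zero, Finset.filter_eq_empty_iff]
    rw [hsum, this]
    simp
  · rw [hsum, count_containing n m i hm1, Finset.card_powersetCard, Finset.card_univ,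
      Fintype.card_fin]
    have keyN : n * (n - 1).choose (m - 1) = n.choose m * m := by
      have := Nat.add_one_mul_choose_eq (n - 1) (m - 1)
      simp -failIfUnchanged only [Nat.succ_eq_add_one] at this
      have h1 : n - 1 + 1 = n := by omega
      have h2 : m - 1 + 1 = m := by omega
      rw [h1, h2] at this
      exact this
    have key : (n : ℝ) * ((n - 1).choose (m - 1)) = (n.choose m) * m := by exact_mod_cast keyN
    have hchoose : (0 : ℝ) < n.choose m := by exact_mod_cast Nat.choose_pos hm
    have hnR : (0 : ℝ) < n := by exact_mod_cast hn
    rw [nsmul_eq_mul]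
    field_simp
    linear_combination d * key

open Classical in
lemma expectedFine_false (n m : ℕ) (d : ℝ) (i : Fin n) (c : Prop) (hc : ¬ c) :
    expectedFine n m d i c = 0 := by
  unfold expectedFine
  rw [Finset.sum_eq_zero, zero_div]
  intro A _
  simp [hc]

/-- a `(k,1)`-persistent `ε`-Bayes-Nash truthful mechanism, together with a
deterrent payment scheme with `mver` verifications and fine `d` satisfying `(mver/n)·d ≥ ε`,
is `k`-tolerant Bayes-Nash truthful: even when up to `k` players announce arbitrary types, no
single player can increase his expected quasilinear utility by mis-reporting. -/
theorem deterrent_scheme_tolerant_truthful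
    {n : ℕ} {T S : Type*} [MeasurableSpace T]
    (𝒯 : Measure T) [IsProbabilityMeasure 𝒯]
    (M : (Fin n → T) → S) (u : Fin n → T → S → ℝ)
    (k mver : ℕ) (ε d : ℝ) (hε : 0 ≤ ε) (hd : 0 ≤ d) (hmver : mver ≤ n)
    (hM : ∀ (I : Finset (Fin n)), I.card ≤ k → ∀ tI : Fin n → T,
      ∀ i : Fin n, i ∉ I → ∀ ti ti' : T,
        (∫ tJ, u i ti (M (fun j => if j = i then ti else if j ∈ I then tI j else tJ j))
            ∂(Measure.pi (fun _ : Fin n => 𝒯))) ≥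
          (∫ tJ, u i ti (M (fun j => if j = i then ti' else if j ∈ I then tI j else tJ j))
              ∂(Measure.pi (fun _ : Fin n => 𝒯))) - ε)
    (hfine : ε ≤ ((mver : ℝ) / n) * d) :
    ∀ (I : Finset (Fin n)), I.card ≤ k → ∀ tI : Fin n → T,
      ∀ i : Fin n, i ∉ I → ∀ ti ti' : T,
        ((∫ tJ, u i ti (M (fun j => if j = i then ti else if j ∈ I then tI j else tJ j))
              ∂(Measure.pi (fun _ : Fin n => 𝒯))) -
            expectedFine n mver d i (ti ≠ ti)) ≥
          ((∫ tJ, u i ti (M (fun j => if j = i then ti' else if j ∈ I then tI j else tJ j))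
                ∂(Measure.pi (fun _ : Fin n => 𝒯))) -
              expectedFine n mver d i (ti' ≠ ti)) := by
  intro I hI tI i hiI ti ti'
  by_cases h : ti' = ti
  · subst h; exact le_refl _
  · have hF0 : expectedFine n mver d i (ti ≠ ti) = 0 :=
      expectedFine_false n mver d i _ (by simp)
    have hFT : expectedFine n mver d i (ti' ≠ ti) = ((mver : ℝ) / n) * d :=
      expectedFine_eq n mver d i hmver _ h
    rw [hF0, hFT]
    have := hM I hI tI i hiI ti ti'
    linarith
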